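/- arXiv:1605.07540 — 6 statements merged into one kernel-verified Lean document; each statement's English description precedes it below -/
import Mathlib

section
/- Let K be a field and B an associative K-algebra (not necessarily unital) with local units, i.e., for every b ∈ B there exists an idempotent e ∈ B with e·b = b = b·e. Then for every two-sided ideal J of B there exist a K-vector space V and a K-linear multiplicative map π : B → End_K(V) which is non-degenerate (V = span{π(b)ξ : b ∈ B, ξ ∈ V}) and satisfies ker(π) = J. -/
/-- Let `K` be a field and `B` a (not necessarily unital) associative
`K`-algebra with local units.  Then every two-sided ideal `J` of `B` is the kernel of a
non-degenerate `K`-linear multiplicative representation `π : B → End_K(V)`. -/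
theorem exists_nondegenerate_representation_with_kernel
    {K : Type*} {B : Type v} [Field K] [NonUnitalRing B]
    [Module K B] [SMulCommClass K B B] [IsScalarTower K B B]
    (hlu : ∀ b : B, ∃ e : B, e * e = e ∧ e * b = b ∧ b * e = b)
    (J : TwoSidedIdeal B) :
    ∃ (V : Type v) (_ : AddCommGroup V) (_ : Module K V)
      (π : B →ₗ[K] Module.End K V),
      (∀ a b : B, π (a * b) = π a * π b) ∧
      (Submodule.span K {v : V | ∃ (b : B) (ξ : V), π b ξ = v} = ⊤) ∧
      (∀ b : B, π b = 0 ↔ b ∈ J) := by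
  classical
  -- J as a K-submodule of B
  let W : Submodule K B :=
    { carrier := {x | x ∈ J}
      add_mem' := fun ha hb => J.add_mem ha hb
      zero_mem' := J.zero_mem
      smul_mem' := by
        intro k x hx
        obtain ⟨e, he, heb, hbe⟩ := hlu x
        have : k • x = (k • e) * x := by
          rw [smul_mul_assoc, heb]
        show k • x ∈ J
        rw [this]
        exact J.mul_mem_left _ _ hx }
  let V := B ⧸ W
  -- left multiplication as a linear endomorphism of B
  let lmul : B → B →ₗ[K] B := fun b =>
    { toFun := fun x => b * x
      map_add' := fun x y => mul_add b x y
      map_smul' := fun k x => mul_smul_comm k b x }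
  have hle : ∀ b : B, W ≤ W.comap (lmul b) := by
    intro b x hx
    show b * x ∈ J
    exact J.mul_mem_left _ _ hx
  let π : B →ₗ[K] Module.End K V :=
    { toFun := fun b => W.mapQ W (lmul b) (hle b)
      map_add' := by
        intro a b
        apply LinearMap.ext
        intro v
        obtain ⟨x, rfl⟩ := Submodule.Quotient.mk_surjective _ v
        show W.mkQ ((a + b) * x) = W.mkQ (a * x) + W.mkQ (b * x)
        rw [add_mul, map_add]
      map_smul' := by
        intro k b
        apply LinearMap.ext
        intro v
        obtain ⟨x, rfl⟩ := Submodule.Quotient.mk_surjective _ v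
        show W.mkQ ((k • b) * x) = k • W.mkQ (b * x)
        rw [smul_mul_assoc, map_smul] }
  refine ⟨V, inferInstance, inferInstance, π, ?_, ?_, ?_⟩
  · intro a b
    apply LinearMap.ext
    intro v
    obtain ⟨x, rfl⟩ := Submodule.Quotient.mk_surjective _ v
    show W.mkQ ((a * b) * x) = W.mkQ (a * (b * x))
    rw [mul_assoc]
  · rw [eq_top_iff]
    rintro v -
    apply Submodule.subset_span
    obtain ⟨x, rfl⟩ := Submodule.Quotient.mk_surjective _ v
    obtain ⟨e, he, heb, hbe⟩ := hlu x
    refine ⟨e, Submodule.Quotient.mk x, ?_⟩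
    show W.mkQ (e * x) = W.mkQ x
    rw [heb]
  · intro b
    constructor
    · intro h
      obtain ⟨e, he, heb, hbe⟩ := hlu b
      have h2 : W.mkQ (b * e) = 0 := LinearMap.congr_fun h (Submodule.Quotient.mk e)
      rw [hbe, Submodule.mkQ_apply, Submodule.Quotient.mk_eq_zero] at h2
      exact h2
    · intro hb
      apply LinearMap.ext
      intro v
      obtain ⟨x, rfl⟩ := Submodule.Quotient.mk_surjective _ v
      show W.mkQ (b * x) = 0
      rw [Submodule.mkQ_apply, Submodule.Quotient.mk_eq_zero]
      exact J.mul_mem_right _ _ hb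
end

section
/- Let x₀ ∈ X be a topologically free point, let Γ be a finite subset of G \ {1}, and let V be an open set with x₀ ∈ V ⊆ ⋂_{g∈Γ} X_{g⁻¹}. Then there exists y ∈ V ∩ Orb(x₀) such that θ_g(y) ≠ y for all g ∈ Γ. -/
/-- A (topological) partial action of a discrete group `G` on a topological space `X`:
open sets `Xg g` and homeomorphisms `θ g : Xg g⁻¹ → Xg g` (encoded as globally defined
maps that are continuous on their domains, with continuous inverse `θ g⁻¹`). -/
structure PartialAction (G : Type*) [Group G] (X : Type*) [TopologicalSpace X] where
  Xg : G → Set X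
  θ : G → X → X
  isOpen_Xg : ∀ g : G, IsOpen (Xg g)
  Xg_one : Xg 1 = Set.univ
  θ_one : ∀ x : X, θ 1 x = x
  mapsTo : ∀ g : G, ∀ x ∈ Xg g⁻¹, θ g x ∈ Xg g
  image_inter : ∀ g h : G, θ g '' (Xg g⁻¹ ∩ Xg h) = Xg g ∩ Xg (g * h)
  θ_comp : ∀ g h : G, ∀ x : X, x ∈ Xg h⁻¹ → x ∈ Xg (g * h)⁻¹ → θ g (θ h x) = θ (g * h) x
  continuousOn : ∀ g : G, ContinuousOn (θ g) (Xg g⁻¹)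

namespace PartialAction

variable {G : Type*} [Group G] {X : Type*} [TopologicalSpace X]

/-- `S x₀ = {g ∈ G : x₀ ∈ X_{g⁻¹}}`. -/
def S (P : PartialAction G X) (x₀ : X) : Set G := {g : G | x₀ ∈ P.Xg g⁻¹}

/-- The orbit of `x₀`:  `Orb(x₀) = {θ_g(x₀) : g ∈ S x₀}`. -/
def orbit (P : PartialAction G X) (x₀ : X) : Set X :=
  {y : X | ∃ g : G, x₀ ∈ P.Xg g⁻¹ ∧ P.θ g x₀ = y}

/-- The isotropy group `H x₀ = {g ∈ S x₀ : θ_g(x₀) = x₀}`. -/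
def isotropy (P : PartialAction G X) (x₀ : X) : Set G :=
  {g : G | x₀ ∈ P.Xg g⁻¹ ∧ P.θ g x₀ = x₀}

/-- A point `x₀` is topologically free if for every `g ≠ 1` and every open `V` with
`x₀ ∈ V ⊆ X_{g⁻¹}` there is `y ∈ V ∩ Orb(x₀)` with `θ_g(y) ≠ y`. -/
def TopFreePoint (P : PartialAction G X) (x₀ : X) : Prop :=
  ∀ g : G, g ≠ 1 → ∀ V : Set X, IsOpen V → x₀ ∈ V → V ⊆ P.Xg g⁻¹ →
    ∃ y ∈ V ∩ P.orbit x₀, P.θ g y ≠ y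

/-- A point `x` is strongly regular if for every `h` fixing `x` there is an open
`V` with `x ∈ V ⊆ X_{h⁻¹}` on which `θ_h` is the identity. -/
def StronglyRegular (P : PartialAction G X) (x : X) : Prop :=
  ∀ h : G, x ∈ P.Xg h⁻¹ → P.θ h x = x →
    ∃ V : Set X, IsOpen V ∧ x ∈ V ∧ V ⊆ P.Xg h⁻¹ ∧ ∀ y ∈ V, P.θ h y = y

end PartialAction

namespace PartialAction

variable {G : Type*} [Group G] {X : Type*} [TopologicalSpace X]

lemma theta_inv_theta (P : PartialAction G X) (h : G) (x : X) (hx : x ∈ P.Xg h⁻¹) :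
    P.θ h⁻¹ (P.θ h x) = x := by
  have := P.θ_comp h⁻¹ h x hx (by simp [P.Xg_one])
  simpa [P.θ_one] using this

lemma mem_dom_mul (P : PartialAction G X) (g h : G) (x : X)
    (hx : x ∈ P.Xg h⁻¹) (hgx : P.θ h x ∈ P.Xg g⁻¹) : x ∈ P.Xg (g * h)⁻¹ := by
  have h1 : P.θ h x ∈ P.Xg ((h⁻¹)⁻¹) := by simpa using P.mapsTo h x hx
  have h2 : P.θ h⁻¹ (P.θ h x) ∈ P.Xg h⁻¹ ∩ P.Xg (h⁻¹ * g⁻¹) := by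
    rw [← P.image_inter h⁻¹ g⁻¹]
    exact Set.mem_image_of_mem _ ⟨h1, hgx⟩
  rw [P.theta_inv_theta h x hx] at h2
  simpa [mul_inv_rev] using h2.2

lemma theta_comp' (P : PartialAction G X) (g h : G) (x : X)
    (hx : x ∈ P.Xg h⁻¹) (hgx : P.θ h x ∈ P.Xg g⁻¹) :
    P.θ g (P.θ h x) = P.θ (g * h) x :=
  P.θ_comp g h x hx (P.mem_dom_mul g h x hx hgx)

lemma isOpen_moved (P : PartialAction G X) [T2Space X] (g : G) :
    IsOpen {z | z ∈ P.Xg g⁻¹ ∧ P.θ g z ≠ z} := by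
  have hc : ContinuousOn (fun z => (P.θ g z, z)) (P.Xg g⁻¹) :=
    (P.continuousOn g).prodMk continuousOn_id
  have := hc.isOpen_inter_preimage (P.isOpen_Xg g⁻¹)
    (isClosed_diagonal (X := X)).isOpen_compl
  have hset : {z | z ∈ P.Xg g⁻¹ ∧ P.θ g z ≠ z}
      = P.Xg g⁻¹ ∩ (fun z => (P.θ g z, z)) ⁻¹' (Set.diagonal X)ᶜ := by
    ext z
    simp [Set.diagonal]
  rw [hset]
  exact this

/-- Topological freeness at `x₀` propagates along the orbit. -/
lemma topFree_along_orbit (P : PartialAction G X) [T2Space X] (x₀ : X)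
    (hx₀ : P.TopFreePoint x₀) (g₀ : G) (hg₀ : g₀ ≠ 1) (W : Set X) (hW : IsOpen W)
    (y : X) (hy : y ∈ W) (hyo : y ∈ P.orbit x₀) (hWsub : W ⊆ P.Xg g₀⁻¹) :
    ∃ z ∈ W ∩ P.orbit x₀, P.θ g₀ z ≠ z := by
  obtain ⟨h, hxh, rfl⟩ := hyo
  by_cases hcase : P.θ g₀ (P.θ h x₀) = P.θ h x₀
  · -- then x₀ lies in the domain of the conjugate g' = h⁻¹ * (g₀ * h)
    set g' : G := h⁻¹ * (g₀ * h) with hg'def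
    have hyW : P.θ h x₀ ∈ P.Xg g₀⁻¹ := hWsub hy
    have hx1 : x₀ ∈ P.Xg (g₀ * h)⁻¹ := P.mem_dom_mul g₀ h x₀ hxh hyW
    have hyXh : P.θ h x₀ ∈ P.Xg h := P.mapsTo h x₀ hxh
    have hθmul : P.θ (g₀ * h) x₀ = P.θ h x₀ := by
      rw [← P.theta_comp' g₀ h x₀ hxh hyW, hcase]
    have hx2 : x₀ ∈ P.Xg g'⁻¹ := by
      refine P.mem_dom_mul h⁻¹ (g₀ * h) x₀ hx1 ?_
      rw [hθmul]; simpa using hyXh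
    have hg' : g' ≠ 1 := by
      intro hone
      apply hg₀
      have h1 : g₀ * h = h := by
        have := congrArg (fun t => h * t) hone
        simpa [hg'def, mul_assoc] using this
      have h2 : g₀ * h = 1 * h := by rw [h1, one_mul]
      exact mul_right_cancel h2
    -- choose the open neighbourhood U of x₀
    set U : Set X := (P.Xg h⁻¹ ∩ (P.θ h) ⁻¹' W) ∩ P.Xg g'⁻¹ with hUdef
    have hUopen : IsOpen U :=
      ((P.continuousOn h).isOpen_inter_preimage (P.isOpen_Xg h⁻¹) hW).inter
        (P.isOpen_Xg g'⁻¹)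
    have hx₀U : x₀ ∈ U := ⟨⟨hxh, by simpa using hy⟩, hx2⟩
    have hUsub : U ⊆ P.Xg g'⁻¹ := fun u hu => hu.2
    obtain ⟨u, ⟨huU, huO⟩, hufix⟩ := hx₀ g' hg' U hUopen hx₀U hUsub
    have huh : u ∈ P.Xg h⁻¹ := huU.1.1
    have huW : P.θ h u ∈ W := huU.1.2
    refine ⟨P.θ h u, ⟨huW, ?_⟩, ?_⟩
    · -- θ h u is in the orbit
      obtain ⟨k, hk, rfl⟩ := huO
      exact ⟨h * k, P.mem_dom_mul h k x₀ hk huh,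
        (P.theta_comp' h k x₀ hk huh).symm ▸ rfl⟩
    · -- θ g₀ (θ h u) ≠ θ h u
      intro hfix
      apply hufix
      have huW' : P.θ h u ∈ P.Xg g₀⁻¹ := hWsub huW
      have e1 : P.θ (g₀ * h) u = P.θ h u := by
        rw [← P.theta_comp' g₀ h u huh huW', hfix]
      have e2 : P.θ (g₀ * h) u ∈ P.Xg (h⁻¹)⁻¹ := by
        rw [e1]; simpa using P.mapsTo h u huh
      have hu1 : u ∈ P.Xg (g₀ * h)⁻¹ := P.mem_dom_mul g₀ h u huh huW'
      calc P.θ g' u = P.θ h⁻¹ (P.θ (g₀ * h) u) := (P.theta_comp' h⁻¹ (g₀ * h) u hu1 e2).symm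
        _ = P.θ h⁻¹ (P.θ h u) := by rw [e1]
        _ = u := P.theta_inv_theta h u huh
  · exact ⟨P.θ h x₀, ⟨hy, ⟨h, hxh, rfl⟩⟩, hcase⟩

end PartialAction

/-- If `x₀` is a topologically free point, `Γ` a finite subset of
`G \ {1}` and `V` an open set with `x₀ ∈ V ⊆ ⋂_{g ∈ Γ} X_{g⁻¹}`, then there is
`y ∈ V ∩ Orb(x₀)` with `θ_g(y) ≠ y` for all `g ∈ Γ`. -/
theorem topFreePoint_stronger_property
    {G X : Type*} [Group G] [TopologicalSpace X]
    [T2Space X] [LocallyCompactSpace X] [TotallyDisconnectedSpace X]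
    (P : PartialAction G X) (hclopen : ∀ g : G, IsClopen (P.Xg g))
    (x₀ : X) (hx₀ : P.TopFreePoint x₀)
    (Γ : Finset G) (hΓ : ∀ g ∈ Γ, g ≠ (1 : G))
    (V : Set X) (hV : IsOpen V) (hx₀V : x₀ ∈ V)
    (hVsub : ∀ g ∈ Γ, V ⊆ P.Xg g⁻¹) :
    ∃ y ∈ V ∩ P.orbit x₀, ∀ g ∈ Γ, P.θ g y ≠ y := by
    classical
  revert hΓ hVsub
  induction Γ using Finset.induction_on with
  | empty =>
    intro _ _
    exact ⟨x₀, ⟨hx₀V, ⟨1, by simp [P.Xg_one], by simp [P.θ_one]⟩⟩, by simp⟩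
  | @insert g₀ Γ' hg₀Γ' ih =>
    intro hΓ hVsub
    obtain ⟨y, ⟨hyV, hyO⟩, hyfix⟩ :=
      ih (fun g hg => hΓ g (Finset.mem_insert_of_mem hg))
        (fun g hg => hVsub g (Finset.mem_insert_of_mem hg))
    set W : Set X := V ∩ ⋂ g ∈ Γ', {z | z ∈ P.Xg g⁻¹ ∧ P.θ g z ≠ z} with hWdef
    have hWopen : IsOpen W :=
      hV.inter (isOpen_biInter_finset fun g _ => P.isOpen_moved g)
    have hyW : y ∈ W := by
      refine ⟨hyV, ?_⟩
      simp only [Set.mem_iInter]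
      exact fun g hg => ⟨hVsub g (Finset.mem_insert_of_mem hg) hyV, hyfix g hg⟩
    have hWsub : W ⊆ P.Xg g₀⁻¹ := fun z hz =>
      hVsub g₀ (Finset.mem_insert_self g₀ Γ') hz.1
    obtain ⟨z, ⟨hzW, hzO⟩, hzfix⟩ :=
      P.topFree_along_orbit x₀ hx₀ g₀ (hΓ g₀ (Finset.mem_insert_self g₀ Γ'))
        W hWopen y hyW hyO hWsub
    refine ⟨z, ⟨hzW.1, hzO⟩, ?_⟩
    intro g hg
    rcases Finset.mem_insert.mp hg with rfl | hg'
    · exact hzfix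
    · have := hzW.2
      simp only [Set.mem_iInter] at this
      exact (this g hg').2
end

section
/- Assume G is countable. Then the set of strongly regular points of X is dense in X. -/
/-- If `G` is countable then the set of strongly regular points is dense. -/
theorem dense_stronglyRegular
    {G X : Type*} [Group G] [Countable G] [TopologicalSpace X]
    [T2Space X] [LocallyCompactSpace X] [TotallyDisconnectedSpace X]
    (P : PartialAction G X) (hclopen : ∀ g : G, IsClopen (P.Xg g)) :
    Dense {x : X | P.StronglyRegular x} := by
  -- For each h, let F h be the fixed-point set of θ h inside Xg h⁻¹.
  set F : G → Set X := fun h => {y | y ∈ P.Xg h⁻¹ ∧ P.θ h y = y} with hF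
  have hFclosed : ∀ h : G, IsClosed (F h) := by
    intro h
    have hco : ContinuousOn (fun y => (P.θ h y, y)) (P.Xg h⁻¹) :=
      (P.continuousOn h).prodMk continuousOn_id
    have : F h = P.Xg h⁻¹ ∩ (fun y => (P.θ h y, y)) ⁻¹' {p : X × X | p.1 = p.2} := by
      ext y; simp [hF, Set.mem_setOf_eq, and_comm]
    rw [this]
    exact hco.preimage_isClosed_of_isClosed (hclopen h⁻¹).isClosed isClosed_diagonal
  set A : G → Set X := fun h => (F h)ᶜ ∪ interior (F h) with hA
  have hAopen : ∀ h, IsOpen (A h) := fun h =>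
    ((hFclosed h).isOpen_compl).union isOpen_interior
  have hAdense : ∀ h, Dense (A h) := by
    intro h
    have hcompl : (A h)ᶜ = F h ∩ (interior (F h))ᶜ := by
      simp [hA, Set.compl_union]
    have hint : interior ((A h)ᶜ) = ∅ := by
      rw [hcompl]
      apply Set.eq_empty_iff_forall_notMem.2
      intro x hx
      have h1 : x ∈ interior (F h) :=
        interior_mono (Set.inter_subset_left) hx
      have h2 : x ∈ (interior (F h))ᶜ :=
        interior_subset hx |>.2
      exact h2 h1
    have := interior_eq_empty_iff_dense_compl.1 hint
    simpa using this
  have hsub : (⋂ h : G, A h) ⊆ {x : X | P.StronglyRegular x} := by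
    intro x hx h hxh hfix
    have hxA : x ∈ A h := Set.mem_iInter.1 hx h
    have hxF : x ∈ F h := ⟨hxh, hfix⟩
    rcases hxA with hc | hi
    · exact absurd hxF hc
    · exact ⟨interior (F h), isOpen_interior, hi,
        fun y hy => (interior_subset hy).1, fun y hy => (interior_subset hy).2⟩
  exact (dense_iInter_of_isOpen hAopen hAdense).mono hsub
end

section
/- Let x₀, x₁ ∈ X be points whose orbits have the same closure, i.e., the closure of Orb(x₀) in X equals the closure of Orb(x₁) in X. Then x₀ is topologically free if and only if x₁ is topologically free. -/
namespace PartialAction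

variable {G : Type*} [Group G] {X : Type*} [TopologicalSpace X]

/-- `θ g⁻¹` undoes `θ g` on `Xg g⁻¹`. -/
lemma theta_inv (P : PartialAction G X) (g : G) {x : X} (hx : x ∈ P.Xg g⁻¹) :
    P.θ g⁻¹ (P.θ g x) = x := by
  have h1 : x ∈ P.Xg (g⁻¹ * g)⁻¹ := by simp [P.Xg_one]
  have := P.θ_comp g⁻¹ g x hx h1
  simpa [P.θ_one] using this

/-- Membership form of `image_inter`. -/
lemma theta_mem (P : PartialAction G X) (g h : G) {x : X}
    (h1 : x ∈ P.Xg g⁻¹) (h2 : x ∈ P.Xg h) : P.θ g x ∈ P.Xg g ∩ P.Xg (g * h) := by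
  rw [← P.image_inter]
  exact ⟨x, ⟨h1, h2⟩, rfl⟩

/-- Main auxiliary lemma: topological freeness transfers along equality of orbit closures. -/
lemma topFree_aux [T2Space X] (P : PartialAction G X) (x₀ x₁ : X)
    (hcl : closure (P.orbit x₀) = closure (P.orbit x₁))
    (H : P.TopFreePoint x₀) : P.TopFreePoint x₁ := by
  intro g hg V hV hx₁V hVsub
  by_contra hc
  push_neg at hc
  -- Step 1: θ g fixes every point of V ∩ closure (orbit x₁).
  have hfixcl : ∀ w ∈ V ∩ closure (P.orbit x₁), P.θ g w = w := by
    rintro w ⟨hwV, hwcl⟩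
    by_contra hne
    obtain ⟨U₁, U₂, hU₁, hU₂, hmem₁, hmem₂, hdisj⟩ := t2_separation hne
    have hcont := P.continuousOn g w (hVsub hwV)
    have hpre : P.θ g ⁻¹' U₁ ∈ nhdsWithin w (P.Xg g⁻¹) := hcont (hU₁.mem_nhds hmem₁)
    rw [mem_nhdsWithin] at hpre
    obtain ⟨N, hN, hwN, hNsub⟩ := hpre
    have hnon : ((N ∩ U₂ ∩ V) ∩ P.orbit x₁).Nonempty := by
      rw [mem_closure_iff] at hwcl
      exact hwcl _ ((hN.inter hU₂).inter hV) ⟨⟨hwN, hmem₂⟩, hwV⟩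
    obtain ⟨y, ⟨⟨hyN, hyU₂⟩, hyV⟩, hyOrb⟩ := hnon
    have hfix := hc y ⟨hyV, hyOrb⟩
    have hy1 : P.θ g y ∈ U₁ := hNsub ⟨hyN, hVsub hyV⟩
    rw [hfix] at hy1
    exact (Set.disjoint_left.mp hdisj hy1) hyU₂
  -- Step 2: V meets the orbit of x₀ : pick z = θ k x₀ ∈ V.
  have hx₁cl : x₁ ∈ closure (P.orbit x₀) := by
    rw [hcl]
    exact subset_closure ⟨1, by simp [P.Xg_one], P.θ_one x₁⟩
  obtain ⟨z, hzV, hzOrb⟩ : (V ∩ P.orbit x₀).Nonempty := by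
    rw [mem_closure_iff] at hx₁cl
    exact hx₁cl V hV hx₁V
  obtain ⟨k, hx₀k, hz⟩ := hzOrb
  -- facts about z
  have hzcl1 : z ∈ closure (P.orbit x₁) := by
    rw [← hcl]; exact subset_closure ⟨k, hx₀k, hz⟩
  have hzfix : P.θ g z = z := hfixcl z ⟨hzV, hzcl1⟩
  have hzginv : z ∈ P.Xg g⁻¹ := hVsub hzV
  have hzg : z ∈ P.Xg g := by
    have := P.mapsTo g z hzginv; rwa [hzfix] at this
  have hzk : z ∈ P.Xg k := by
    have := P.mapsTo k x₀ hx₀k; rwa [hz] at this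
  have hzgk : z ∈ P.Xg (g⁻¹ * k) := by
    have hzg' : z ∈ P.Xg g⁻¹⁻¹ := by rwa [inv_inv]
    have hmem := P.theta_mem g⁻¹ k hzg' hzk
    have hinv : P.θ g⁻¹ z = z := by
      conv_lhs => rw [← hzfix]
      exact P.theta_inv g hzginv
    have h2 := hmem.2
    rwa [hinv] at h2
  -- Step 3: build the open set W around x₀.
  set T : Set X := V ∩ P.Xg g⁻¹ ∩ P.Xg (g⁻¹ * k) ∩ P.Xg k with hT
  have hTopen : IsOpen T :=
    ((hV.inter (P.isOpen_Xg g⁻¹)).inter (P.isOpen_Xg (g⁻¹ * k))).inter (P.isOpen_Xg k)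
  set W : Set X := P.Xg k⁻¹ ∩ P.θ k ⁻¹' T with hW
  have hWopen : IsOpen W :=
    (P.continuousOn k).isOpen_inter_preimage (P.isOpen_Xg k⁻¹) hTopen
  have hx₀W : x₀ ∈ W := by
    refine ⟨hx₀k, ?_⟩
    show P.θ k x₀ ∈ T
    rw [hz]
    exact ⟨⟨⟨hzV, hzginv⟩, hzgk⟩, hzk⟩
  have hconj : (k⁻¹ * g * k)⁻¹ = k⁻¹ * (g⁻¹ * k) := by group
  have hWsub : W ⊆ P.Xg (k⁻¹ * g * k)⁻¹ := by
    rintro y ⟨hyk, hyT⟩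
    have hyT' : P.θ k y ∈ T := hyT
    have hwk : P.θ k y ∈ P.Xg k⁻¹⁻¹ := by rw [inv_inv]; exact hyT'.2
    have hwgk : P.θ k y ∈ P.Xg (g⁻¹ * k) := hyT'.1.2
    have hmem := P.theta_mem k⁻¹ (g⁻¹ * k) hwk hwgk
    rw [P.theta_inv k hyk] at hmem
    rw [hconj]
    exact hmem.2
  have hg' : k⁻¹ * g * k ≠ 1 := by
    intro h1
    apply hg
    have : g = k * (k⁻¹ * g * k) * k⁻¹ := by group
    rw [h1] at this
    simpa using this
  -- Step 4: apply topological freeness of x₀ and derive a contradiction.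
  obtain ⟨y, ⟨hyW, hyOrb⟩, hyne⟩ := H (k⁻¹ * g * k) hg' W hWopen hx₀W hWsub
  apply hyne
  obtain ⟨hyk, hyT⟩ := hyW
  have hyT' : P.θ k y ∈ T := hyT
  obtain ⟨⟨⟨hwV, hwginv⟩, hwgk⟩, hwk⟩ := hyT'
  -- θ k y ∈ orbit x₀
  obtain ⟨m, hx₀m, hmy⟩ := hyOrb
  have hym : y ∈ P.Xg m := by
    have := P.mapsTo m x₀ hx₀m; rwa [hmy] at this
  have hx₀km : x₀ ∈ P.Xg (k * m)⁻¹ := by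
    have hym' : y ∈ P.Xg m⁻¹⁻¹ := by rwa [inv_inv]
    have hmem := P.theta_mem m⁻¹ k⁻¹ hym' hyk
    have hx₀eq : P.θ m⁻¹ y = x₀ := by rw [← hmy]; exact P.theta_inv m hx₀m
    rw [hx₀eq] at hmem
    rw [mul_inv_rev]
    exact hmem.2
  have hwOrb : P.θ k y ∈ P.orbit x₀ :=
    ⟨k * m, hx₀km, by rw [← P.θ_comp k m x₀ hx₀m hx₀km, hmy]⟩
  have hwcl : P.θ k y ∈ closure (P.orbit x₁) := by
    rw [← hcl]; exact subset_closure hwOrb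
  have hwfix : P.θ g (P.θ k y) = P.θ k y := hfixcl _ ⟨hwV, hwcl⟩
  -- compute θ (k⁻¹ * g * k) y = y
  have hygk : y ∈ P.Xg (g * k)⁻¹ := by
    have hwk' : P.θ k y ∈ P.Xg k⁻¹⁻¹ := by rwa [inv_inv]
    have hmem := P.theta_mem k⁻¹ g⁻¹ hwk' hwginv
    rw [P.theta_inv k hyk] at hmem
    rw [mul_inv_rev]
    exact hmem.2
  have hstep1 : P.θ (g * k) y = P.θ k y := by
    rw [← P.θ_comp g k y hyk hygk, hwfix]
  have hyconj : y ∈ P.Xg (k⁻¹ * (g * k))⁻¹ := by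
    have := hWsub ⟨hyk, hyT⟩
    rwa [mul_assoc] at this
  have hstep2 : P.θ k⁻¹ (P.θ (g * k) y) = P.θ (k⁻¹ * (g * k)) y :=
    P.θ_comp k⁻¹ (g * k) y hygk hyconj
  have : P.θ (k⁻¹ * (g * k)) y = y := by
    rw [← hstep2, hstep1, P.theta_inv k hyk]
  rwa [mul_assoc]

end PartialAction

/-- Two points whose orbits have the same closure are simultaneously
topologically free or not. -/
theorem topFreePoint_of_eq_orbit_closure
    {G X : Type*} [Group G] [TopologicalSpace X]
    [T2Space X] [LocallyCompactSpace X] [TotallyDisconnectedSpace X]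
    (P : PartialAction G X) (hclopen : ∀ g : G, IsClopen (P.Xg g))
    (x₀ x₁ : X) (h : closure (P.orbit x₀) = closure (P.orbit x₁)) :
    P.TopFreePoint x₀ ↔ P.TopFreePoint x₁ :=
  ⟨fun H => P.topFree_aux x₀ x₁ h H, fun H => P.topFree_aux x₁ x₀ h.symm H⟩
end

section
/- Let x₀ ∈ X, let Γ ⊆ G, and let k ∈ S_{x₀} be such that for every g ∈ Γ one has θ_k(x₀) ∈ X_{g⁻¹} and θ_g(θ_k(x₀)) = θ_k(x₀). Suppose l ∈ G is such that Γ ∩ kH_{x₀}l⁻¹ is nonempty, i.e., k⁻¹g₁l ∈ H_{x₀} for some g₁ ∈ Γ. Then l ∈ S_{x₀}, θ_l(x₀) = θ_k(x₀), and Γ ⊆ kH_{x₀}l⁻¹, i.e., k⁻¹gl ∈ H_{x₀} for every g ∈ Γ. -/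
/-- Auxiliary: `θ a⁻¹ (θ a x) = x` for `x ∈ Xg a⁻¹`. -/
lemma PartialAction.theta_inv_theta_s6 {G X : Type*} [Group G] [TopologicalSpace X]
    (P : PartialAction G X) (a : G) (x : X) (hx : x ∈ P.Xg a⁻¹) :
    P.θ a⁻¹ (P.θ a x) = x := by
  have h := P.θ_comp a⁻¹ a x hx (by simp [P.Xg_one])
  simpa [P.θ_one] using h

/-- Auxiliary: membership transfer via `image_inter`. -/
lemma PartialAction.mem_Xg_of_image {G X : Type*} [Group G] [TopologicalSpace X]
    (P : PartialAction G X) (a b : G) {y : X} (hy1 : y ∈ P.Xg a⁻¹)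
    (hy2 : y ∈ P.Xg b) : P.θ a y ∈ P.Xg (a * b) := by
  have h := P.image_inter a b
  have : P.θ a y ∈ P.θ a '' (P.Xg a⁻¹ ∩ P.Xg b) := ⟨y, ⟨hy1, hy2⟩, rfl⟩
  rw [h] at this
  exact this.2

/-- Under the hypotheses of the previous lemma, if `l ∈ G` is such that
`Γ ∩ k H_{x₀} l⁻¹ ≠ ∅`, then `l ∈ S x₀`, `θ_l(x₀) = θ_k(x₀)`, and `Γ ⊆ k H_{x₀} l⁻¹`. -/
theorem fixingConjuga_two
    {G X : Type*} [Group G] [TopologicalSpace X]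
    (P : PartialAction G X) (x₀ : X) (Γ : Set G) (k : G)
    (hk : k ∈ P.S x₀)
    (hfix : ∀ g ∈ Γ, P.θ k x₀ ∈ P.Xg g⁻¹ ∧ P.θ g (P.θ k x₀) = P.θ k x₀)
    (l : G) (g₁ : G) (hg₁ : g₁ ∈ Γ)
    (hg₁l : k⁻¹ * g₁ * l ∈ P.isotropy x₀) :
    l ∈ P.S x₀ ∧ P.θ l x₀ = P.θ k x₀ ∧
      ∀ g ∈ Γ, k⁻¹ * g * l ∈ P.isotropy x₀ := by
  obtain ⟨hh1m, hh1f⟩ := hg₁l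
  have hk' : x₀ ∈ P.Xg k⁻¹ := hk
  have hky : P.θ k⁻¹ (P.θ k x₀) = x₀ := P.theta_inv_theta_s6 k x₀ hk'
  -- x₀ ∈ Xg (k⁻¹g₁l)
  have hx1 : x₀ ∈ P.Xg (k⁻¹ * g₁ * l) := by
    have := P.mapsTo (k⁻¹ * g₁ * l) x₀ hh1m
    rwa [hh1f] at this
  have hinv : P.θ (k⁻¹ * g₁ * l)⁻¹ x₀ = x₀ := by
    have := P.theta_inv_theta_s6 (k⁻¹ * g₁ * l) x₀ hh1m
    rwa [hh1f] at this
  -- x₀ ∈ Xg (g₁l)⁻¹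
  have h3 : x₀ ∈ P.Xg (g₁ * l)⁻¹ := by
    have h := P.mem_Xg_of_image (k⁻¹ * g₁ * l)⁻¹ k⁻¹ (by simpa using hx1) hk'
    rw [hinv] at h
    have e : (k⁻¹ * g₁ * l)⁻¹ * k⁻¹ = (g₁ * l)⁻¹ := by group
    rwa [e] at h
  -- θ (g₁l) x₀ = θ k x₀
  have hgl : P.θ (g₁ * l) x₀ = P.θ k x₀ := by
    have hc := P.θ_comp k (k⁻¹ * g₁ * l) x₀ hh1m
      (by have e : (k * (k⁻¹ * g₁ * l))⁻¹ = (g₁ * l)⁻¹ := by group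
          rw [e]; exact h3)
    have e : k * (k⁻¹ * g₁ * l) = g₁ * l := by group
    rw [hh1f, e] at hc
    exact hc.symm
  obtain ⟨hyg1, hfg1⟩ := hfix g₁ hg₁
  have hy_gl_mem : P.θ k x₀ ∈ P.Xg (g₁ * l) := by
    have := P.mapsTo (g₁ * l) x₀ h3; rwa [hgl] at this
  have hinv_gl : P.θ (g₁ * l)⁻¹ (P.θ k x₀) = x₀ := by
    have := P.theta_inv_theta_s6 (g₁ * l) x₀ h3; rwa [hgl] at this
  have hy_g1 : P.θ k x₀ ∈ P.Xg g₁ := by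
    have := P.mapsTo g₁ (P.θ k x₀) hyg1; rwa [hfg1] at this
  -- l ∈ S x₀
  have hl : x₀ ∈ P.Xg l⁻¹ := by
    have h := P.mem_Xg_of_image (g₁ * l)⁻¹ g₁ (by simpa using hy_gl_mem) hy_g1
    rw [hinv_gl] at h
    have e : (g₁ * l)⁻¹ * g₁ = l⁻¹ := by group
    rwa [e] at h
  have hg1inv : P.θ g₁⁻¹ (P.θ k x₀) = P.θ k x₀ := by
    have := P.theta_inv_theta_s6 g₁ (P.θ k x₀) hyg1; rwa [hfg1] at this
  -- θ l x₀ = θ k x₀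
  have hθl : P.θ l x₀ = P.θ k x₀ := by
    have hc := P.θ_comp g₁⁻¹ (g₁ * l) x₀ h3
      (by have e : (g₁⁻¹ * (g₁ * l))⁻¹ = l⁻¹ := by group
          rw [e]; exact hl)
    rw [hgl, hg1inv] at hc
    have e : g₁⁻¹ * (g₁ * l) = l := by group
    rw [e] at hc
    exact hc.symm
  refine ⟨hl, hθl, ?_⟩
  intro g hg
  obtain ⟨hyg, hfg⟩ := hfix g hg
  have hy_l : P.θ k x₀ ∈ P.Xg l := by
    have := P.mapsTo l x₀ hl; rwa [hθl] at this
  have hinv_l : P.θ l⁻¹ (P.θ k x₀) = x₀ := by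
    have := P.theta_inv_theta_s6 l x₀ hl; rwa [hθl] at this
  have hglm : x₀ ∈ P.Xg (g * l)⁻¹ := by
    have h := P.mem_Xg_of_image l⁻¹ g⁻¹ (by simpa using hy_l) hyg
    rw [hinv_l] at h
    have e : l⁻¹ * g⁻¹ = (g * l)⁻¹ := by group
    rwa [e] at h
  have hθgl : P.θ (g * l) x₀ = P.θ k x₀ := by
    have hc := P.θ_comp g l x₀ hl hglm
    rw [hθl, hfg] at hc
    exact hc.symm
  have hy_glm : P.θ k x₀ ∈ P.Xg (g * l) := by
    have := P.mapsTo (g * l) x₀ hglm; rwa [hθgl] at this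
  have hinvgl : P.θ (g * l)⁻¹ (P.θ k x₀) = x₀ := by
    have := P.theta_inv_theta_s6 (g * l) x₀ hglm; rwa [hθgl] at this
  have hy_k : P.θ k x₀ ∈ P.Xg k := P.mapsTo k x₀ hk'
  have hmem : x₀ ∈ P.Xg (k⁻¹ * g * l)⁻¹ := by
    have h := P.mem_Xg_of_image (g * l)⁻¹ k (by simpa using hy_glm) hy_k
    rw [hinvgl] at h
    have e : (g * l)⁻¹ * k = (k⁻¹ * g * l)⁻¹ := by group
    rwa [e] at h
  refine ⟨hmem, ?_⟩
  have hc := P.θ_comp k⁻¹ (g * l) x₀ hglm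
    (by have e : (k⁻¹ * (g * l))⁻¹ = (k⁻¹ * g * l)⁻¹ := by group
        rw [e]; exact hmem)
  rw [hθgl, hky] at hc
  have e : k⁻¹ * (g * l) = k⁻¹ * g * l := (mul_assoc _ _ _).symm
  rw [e] at hc
  exact hc.symm
end

section
/- ⋂_{x∈X} Z_x = {0}; that is, if a vector ξ ∈ V lies in Z_x for every x ∈ X, then ξ = 0. -/
/-- `f : X → K` is locally constant with compact support. -/
def IsLc {X : Type*} [TopologicalSpace X] {K : Type*} [Zero K] (f : X → K) : Prop :=
  IsLocallyConstant f ∧ HasCompactSupport f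

section Aux

variable {X K : Type*} [TopologicalSpace X] [Field K]

lemma IsLc.add' {f g : X → K} (hf : IsLc f) (hg : IsLc g) : IsLc (f + g) :=
  ⟨hf.1.add hg.1, hf.2.add hg.2⟩

lemma IsLc.mul' {f g : X → K} (hf : IsLc f) (hg : IsLc g) : IsLc (f * g) :=
  ⟨hf.1.mul hg.1, hf.2.mul_right⟩

lemma IsLc.smul' (c : K) {f : X → K} (hf : IsLc f) : IsLc (c • f) :=
  ⟨hf.1.comp (fun y => c * y), hf.2.smul_left⟩

lemma isLc_zero : IsLc (0 : X → K) :=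
  ⟨IsLocallyConstant.const 0, HasCompactSupport.zero⟩

/-- indicator of a compact clopen set is locally constant with compact support -/
lemma isLc_indicator {U : Set X} (hU : IsClopen U) (hUc : IsCompact U) :
    IsLc (U.indicator (fun _ => (1 : K))) := by
  constructor
  · intro s
    by_cases h1 : (1 : K) ∈ s <;> by_cases h0 : (0 : K) ∈ s
    · convert isOpen_univ
      ext x; simp only [Set.mem_preimage, Set.mem_univ, iff_true]
      by_cases hx : x ∈ U <;> simp [Set.indicator_apply, hx, h1, h0]
    · convert hU.2
      ext x
      by_cases hx : x ∈ U <;> simp [Set.indicator_apply, hx, h1, h0]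
    · convert hU.1.isOpen_compl
      ext x
      by_cases hx : x ∈ U <;> simp [Set.indicator_apply, hx, h1, h0]
    · convert isOpen_empty
      ext x
      by_cases hx : x ∈ U <;> simp [Set.indicator_apply, hx, h1, h0]
  · have hsupp : Function.support (U.indicator (fun _ => (1 : K))) ⊆ U :=
      Set.support_indicator_subset
    exact hUc.of_isClosed_subset isClosed_closure (closure_minimal hsupp hU.1)

lemma support_clopen_compact {f : X → K} (hf : IsLc f) :
    IsClopen (Function.support f) ∧ IsCompact (Function.support f) := by
  have hopen : IsOpen (Function.support f) := by
    have h1 : Function.support f = f ⁻¹' ({0}ᶜ) := by ext x; simp [Function.support]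
    rw [h1]; exact hf.1 _
  have hclosed : IsClosed (Function.support f) := by
    have h2 : (Function.support f)ᶜ = f ⁻¹' {0} := by ext x; simp [Function.support]
    rw [← isOpen_compl_iff, h2]; exact hf.1 _
  refine ⟨⟨hclosed, hopen⟩, ?_⟩
  have : Function.support f = tsupport f := by
    rw [tsupport, hclosed.closure_eq]
  rw [this]; exact hf.2

end Aux

/-- Let `π` be a non-degenerate multiplicative `K`-linear representation of
`L_c(X)` on `V`.  Then `⋂_{x ∈ X} Z_x = {0}`, where
`Z_x = span{π(g)η : g ∈ I_x, η ∈ V}`. -/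
theorem iInter_Zx_eq_bot
    {X K V : Type*} [TopologicalSpace X] [T2Space X] [LocallyCompactSpace X]
    [TotallyDisconnectedSpace X] [Field K] [AddCommGroup V] [Module K V]
    (π : (X → K) → (V →ₗ[K] V))
    (hadd : ∀ f g : X → K, IsLc f → IsLc g → π (f + g) = π f + π g)
    (hsmul : ∀ (c : K) (f : X → K), IsLc f → π (c • f) = c • π f)
    (hmul : ∀ f g : X → K, IsLc f → IsLc g → π (f * g) = π f ∘ₗ π g)
    (hnd : Submodule.span K {v : V | ∃ (f : X → K) (ξ : V), IsLc f ∧ π f ξ = v} = ⊤)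
    (ξ : V)
    (h : ∀ x : X, ξ ∈
      Submodule.span K {v : V | ∃ (g : X → K) (η : V), IsLc g ∧ g x = 0 ∧ π g η = v}) :
    ξ = 0 := by
  classical
  -- π of the zero function is zero
  have hπ0 : π (0 : X → K) = 0 := by
    have := hsmul 0 0 isLc_zero
    simpa using this
  -- sub rule
  have hsub : ∀ f g : X → K, IsLc f → IsLc g → π (f - g) = π f - π g := by
    intro f g hf hg
    have h1 : f - g = f + (-1 : K) • g := by ext x; simp; ring
    rw [h1, hadd f _ hf (hg.smul' (-1)), hsmul (-1) g hg]
    simp [sub_eq_add_neg]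
  -- Step 1: find compact clopen U with π(1_U) ξ = ξ
  have hmem : ξ ∈ Submodule.span K {v : V | ∃ (f : X → K) (ξ' : V), IsLc f ∧ π f ξ' = v} := by
    rw [hnd]; trivial
  obtain ⟨n, a, b, hab⟩ := Submodule.mem_span_set'.mp hmem
  choose f η hf hfη using fun i => (b i).2
  set U : Set X := ⋃ i : Fin n, Function.support (f i) with hUdef
  have hUclopen : IsClopen U := isClopen_iUnion_of_finite fun i => (support_clopen_compact (hf i)).1
  have hUcomp : IsCompact U := isCompact_iUnion fun i => (support_clopen_compact (hf i)).2
  set e : X → K := U.indicator (fun _ => (1 : K)) with hedef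
  have he : IsLc e := isLc_indicator hUclopen hUcomp
  have heξ : π e ξ = ξ := by
    have key : ∀ i, π e (π (f i) (η i)) = π (f i) (η i) := by
      intro i
      have hef : e * f i = f i := by
        ext x
        by_cases hx : x ∈ Function.support (f i)
        · have hxU : x ∈ U := Set.mem_iUnion.mpr ⟨i, hx⟩
          simp [hedef, Set.indicator_apply, hxU]
        · have : f i x = 0 := by simpa [Function.support] using hx
          simp [this]
      calc π e (π (f i) (η i)) = (π e ∘ₗ π (f i)) (η i) := rfl
        _ = π (e * f i) (η i) := by rw [hmul e (f i) he (hf i)]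
        _ = π (f i) (η i) := by rw [hef]
    calc π e ξ = π e (∑ i, a i • (b i : V)) := by rw [hab]
      _ = ∑ i, a i • π e (b i : V) := by rw [map_sum]; simp
      _ = ∑ i, a i • (b i : V) := by
          refine Finset.sum_congr rfl fun i _ => ?_
          rw [show ((b i : V)) = π (f i) (η i) from (hfη i).symm, key i]
      _ = ξ := hab
  -- Step 2: for each x ∈ U find compact clopen W ⊆ U containing x with π(1_W) ξ = 0
  have hstep2 : ∀ x ∈ U, ∃ W : Set X, IsClopen W ∧ IsCompact W ∧ x ∈ W ∧ W ⊆ U ∧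
      π (W.indicator (fun _ => (1 : K))) ξ = 0 := by
    intro x hxU
    obtain ⟨m, c, w, hcw⟩ := Submodule.mem_span_set'.mp (h x)
    choose g η' hg hgx hgη using fun j => (w j).2
    set W : Set X := U ∩ ⋂ j : Fin m, (g j) ⁻¹' {0} with hWdef
    have hWclopen : IsClopen W := by
      refine hUclopen.inter (isClopen_iInter_of_finite fun j => ?_)
      constructor
      · rw [← isOpen_compl_iff]
        have := (hg j).1 ({0}ᶜ : Set K)
        simpa using this
      · exact (hg j).1 ({0} : Set K)
    have hWcomp : IsCompact W := hUcomp.of_isClosed_subset hWclopen.1 Set.inter_subset_left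
    have hxW : x ∈ W := ⟨hxU, Set.mem_iInter.mpr fun j => hgx j⟩
    refine ⟨W, hWclopen, hWcomp, hxW, Set.inter_subset_left, ?_⟩
    set eW : X → K := W.indicator (fun _ => (1 : K)) with heWdef
    have heW : IsLc eW := isLc_indicator hWclopen hWcomp
    have key : ∀ j, π eW (π (g j) (η' j)) = 0 := by
      intro j
      have hzero : eW * g j = 0 := by
        ext y
        by_cases hy : y ∈ W
        · have : g j y = 0 := by
            have := hy.2
            simpa using Set.mem_iInter.mp this j
          simp [this]
        · simp [heWdef, Set.indicator_apply, hy]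
      calc π eW (π (g j) (η' j)) = (π eW ∘ₗ π (g j)) (η' j) := rfl
        _ = π (eW * g j) (η' j) := by rw [hmul eW (g j) heW (hg j)]
        _ = 0 := by rw [hzero, hπ0]; rfl
    calc π eW ξ = π eW (∑ j, c j • (w j : V)) := by rw [hcw]
      _ = ∑ j, c j • π eW (w j : V) := by rw [map_sum]; simp
      _ = 0 := by
          refine Finset.sum_eq_zero fun j _ => ?_
          rw [show ((w j : V)) = π (g j) (η' j) from (hgη j).symm, key j]
          simp
  choose! W hW1 hW2 hW3 hW4 hW5 using hstep2
  -- Step 3: finite subcover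
  have hcover : U ⊆ ⋃ x ∈ U, W x := fun x hx => Set.mem_biUnion hx (hW3 x hx)
  obtain ⟨t, htU, htfin, htcov⟩ :=
    hUcomp.elim_finite_subcover_image (fun x hx => (hW1 x hx).2) hcover
  -- induction over a finset of points
  have main : ∀ s : Finset X, (↑s : Set X) ⊆ U →
      IsClopen (⋃ x ∈ s, W x) ∧ IsCompact (⋃ x ∈ s, W x) ∧
      π ((⋃ x ∈ s, W x).indicator (fun _ => (1 : K))) ξ = 0 := by
    intro s
    induction s using Finset.induction_on with
    | empty =>
        intro _
        refine ⟨by simp [isClopen_empty], by simp, ?_⟩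
        have : (⋃ x ∈ (∅ : Finset X), W x) = (∅ : Set X) := by simp
        rw [this, Set.indicator_empty]
        have : (fun _ : X => (0 : K)) = (0 : X → K) := rfl
        rw [this, hπ0]; rfl
    | @insert a s ha ih =>
        intro hsub'
        have haU : a ∈ U := hsub' (by simp)
        have hsU : (↑s : Set X) ⊆ U := fun x hx => hsub' (by simp [hx])
        obtain ⟨ihclopen, ihcomp, ihzero⟩ := ih hsU
        set A : Set X := W a with hA
        set B : Set X := ⋃ x ∈ s, W x with hB
        have hunion : (⋃ x ∈ insert a s, W x) = A ∪ B := by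
          simp [hA, hB, Set.iUnion_iUnion_eq_or_left]
        have hAclopen := (hW1 a haU)
        have hAcomp := (hW2 a haU)
        have hABclopen : IsClopen (A ∪ B) := hAclopen.union ihclopen
        have hABcomp : IsCompact (A ∪ B) := hAcomp.union ihcomp
        refine ⟨by rw [hunion]; exact hABclopen, by rw [hunion]; exact hABcomp, ?_⟩
        rw [hunion]
        set eA : X → K := A.indicator (fun _ => (1 : K)) with heA
        set eB : X → K := B.indicator (fun _ => (1 : K)) with heB
        have hleA : IsLc eA := isLc_indicator hAclopen hAcomp
        have hleB : IsLc eB := isLc_indicator ihclopen ihcomp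
        have hfun : (A ∪ B).indicator (fun _ => (1 : K)) = eA + eB - eA * eB := by
          ext y
          by_cases hyA : y ∈ A <;> by_cases hyB : y ∈ B <;>
            simp [heA, heB, Set.indicator_apply, hyA, hyB]
        rw [hfun, hsub _ _ (hleA.add' hleB) (hleA.mul' hleB), hadd _ _ hleA hleB]
        have h1 : π eA ξ = 0 := hW5 a haU
        have h2 : π eB ξ = 0 := ihzero
        have h3 : π (eA * eB) ξ = 0 := by
          rw [hmul _ _ hleA hleB]
          show π eA (π eB ξ) = 0
          rw [h2]; simp
        simp [h1, h2, h3]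
  -- conclude : U equals the union over t
  set tf : Finset X := htfin.toFinset with htf
  have hcoe : (↑tf : Set X) = t := htfin.coe_toFinset
  have hUnEq : (⋃ x ∈ tf, W x) = ⋃ x ∈ t, W x := by
    rw [← hcoe]; simp
  have hsubU : (⋃ x ∈ tf, W x) ⊆ U :=
    Set.iUnion₂_subset fun x hx => hW4 x (htU (htfin.mem_toFinset.mp hx))
  have htU' : (↑tf : Set X) ⊆ U := by rw [hcoe]; exact htU
  have hUeq : U = ⋃ x ∈ tf, W x :=
    Set.Subset.antisymm (by rw [hUnEq]; exact htcov) hsubU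
  obtain ⟨_, _, hzero⟩ := main tf htU'
  rw [← heξ, hedef, hUeq, hzero]
end
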